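/- (Lemma 3: polynomial concentration of the collected reward.) Suppose the UCB policy is run with a parameter α satisfying ξη(1−η) ≤ α < ξ(1−η) and α > 2. Let A(n) = ⌈(2 β^{1/ξ} / Δ_min)^{1/(1−η)} · n^{α/(ξ(1−η))}⌉ and N_p = min{ t ≥ 1 : t ≥ A(t) }. Then for every integer n ≥ N_p and every real x ≥ 1, setting r_0 = n^η + 2R(K−1)(3 + A(n)), both tails satisfy: P( n X̄_n − n μ* ≥ r_0 x ) ≤ β/x^ξ + 2(K−1) / ( (α−1) ((1 + A(n)) x)^{α−1} ), and P( n X̄_n − n μ* ≤ −r_0 x ) ≤ β/x^ξ + 2(K−1) / ( (α−1) ((1 + A(n)) x)^{α−1} ). -/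

import Mathlib

open MeasureTheory ProbabilityTheory Finset

noncomputable section

/-- Empirical average `X̄_{i,n} = (1/n) ∑_{t=1}^n X_{i,t}` of the first `n` rewards of arm `i`. -/
def empAvg {Ω : Type*} {K : ℕ} (X : Fin K → ℕ → Ω → ℝ) (i : Fin K) (n : ℕ) (ω : Ω) : ℝ :=
  (∑ t ∈ Finset.Icc 1 n, X i t ω) / n

/-- Bonus term `B_{t,s} = β^{1/ξ} t^{α/ξ} / s^{1-η}`. -/
def bonus (β ξ α η : ℝ) (t s : ℕ) : ℝ :=
  β ^ (1 / ξ) * (t : ℝ) ^ (α / ξ) / (s : ℝ) ^ (1 - η)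

/-- Upper confidence index `U_{i,s,t} = X̄_{i,s} + B_{t,s}`. -/
def ucbIdx {Ω : Type*} {K : ℕ} (X : Fin K → ℕ → Ω → ℝ) (β ξ α η : ℝ)
    (i : Fin K) (s t : ℕ) (ω : Ω) : ℝ :=
  empAvg X i s ω + bonus β ξ α η t s

/-- `T_i(t) = ∑_{l=1}^t 1{I_l = i}`, the number of plays of arm `i` up to (and including)
time `t`. -/
def playCount {Ω : Type*} {K : ℕ} (I : ℕ → Ω → Fin K) (i : Fin K) (t : ℕ) (ω : Ω) : ℕ :=
  ((Finset.Icc 1 t).filter fun l => I l ω = i).card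

/-- The `EReal`-valued index `X̄_{i,T_i(t)} + B_{t,T_i(t)}` used by the UCB policy at the end
of time `t`, with the convention that the index is `+∞` when `T_i(t) = 0`
(i.e. `B_{t,0} = +∞`). -/
def ucbIdxE {Ω : Type*} {K : ℕ} (X : Fin K → ℕ → Ω → ℝ) (β ξ α η : ℝ)
    (I : ℕ → Ω → Fin K) (j : Fin K) (t : ℕ) (ω : Ω) : EReal :=
  if playCount I j t ω = 0 then ⊤
  else ((ucbIdx X β ξ α η j (playCount I j t ω) t ω : ℝ) : EReal)

/-- Empirical average `X̄_n = (1/n) ∑_{i=1}^K T_i(n) X̄_{i,T_i(n)}` of all rewards collected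
in the first `n` plays. -/
def rewardAvg {Ω : Type*} {K : ℕ} (X : Fin K → ℕ → Ω → ℝ) (I : ℕ → Ω → Fin K)
    (n : ℕ) (ω : Ω) : ℝ :=
  (∑ i : Fin K, (playCount I i n ω : ℝ) * empAvg X i (playCount I i n ω) ω) / n

namespace UCBaux
variable {Ω : Type*} {K : ℕ} (X : Fin K → ℕ → Ω → ℝ) (I : ℕ → Ω → Fin K) (i : Fin K) (ω : Ω)



lemma playCount_zero : playCount I i 0 ω = 0 := by
  simp [playCount]

lemma playCount_succ (t : ℕ) :
    playCount I i (t+1) ω = playCount I i t ω + if I (t+1) ω = i then 1 else 0 := by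
  unfold playCount
  rw [show Finset.Icc 1 (t+1) = insert (t+1) (Finset.Icc 1 t) by
    ext x; simp; omega]
  rw [Finset.filter_insert]
  split_ifs with h
  · rw [Finset.card_insert_of_notMem (by simp)]
  · simp

lemma playCount_le (t : ℕ) : playCount I i t ω ≤ t := by
  calc playCount I i t ω ≤ (Finset.Icc 1 t).card := Finset.card_filter_le _ _
  _ = t := by rw [Nat.card_Icc]; omega

lemma sum_playCount (t : ℕ) : ∑ j : Fin K, playCount I j t ω = t := by
  classical
  have := Finset.card_eq_sum_card_fiberwise
    (f := fun l => I l ω) (s := Finset.Icc 1 t) (t := Finset.univ)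
    (fun x _ => Finset.mem_univ _)
  rw [Nat.card_Icc] at this
  simpa [playCount] using this.symm

lemma exists_hit {s n : ℕ} (h : s < playCount I i n ω) :
    ∃ t, 1 ≤ t ∧ t ≤ n ∧ I t ω = i ∧ playCount I i (t-1) ω = s := by
  induction n with
  | zero => rw [playCount_zero] at h; omega
  | succ n ih =>
    by_cases h' : s < playCount I i n ω
    · obtain ⟨t, h1, h2, h3, h4⟩ := ih h'
      exact ⟨t, h1, by omega, h3, h4⟩
    · have hs := playCount_succ I i ω n
      split_ifs at hs with hI
      · refine ⟨n+1, by omega, le_rfl, hI, ?_⟩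
        simp only [Nat.add_sub_cancel]
        omega
      · omega





lemma mul_empAvg (m : ℕ) : (m : ℝ) * empAvg X i m ω = ∑ t ∈ Finset.Icc 1 m, X i t ω := by
  rcases Nat.eq_zero_or_pos m with rfl | hm
  · simp [empAvg]
  · rw [empAvg, mul_div_cancel₀]
    exact Nat.cast_ne_zero.mpr (by omega)

lemma abs_sum_le {R : ℝ} (hX : ∀ t, |X i t ω| ≤ R) (s : Finset ℕ) :
    |∑ t ∈ s, X i t ω| ≤ R * s.card := by
  calc |∑ t ∈ s, X i t ω| ≤ ∑ t ∈ s, |X i t ω| := Finset.abs_sum_le_sum_abs _ _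
  _ ≤ ∑ t ∈ s, R := Finset.sum_le_sum fun t _ => hX t
  _ = R * s.card := by rw [Finset.sum_const, nsmul_eq_mul, mul_comm]

lemma key_step {α : ℝ} (hα : 2 < α) (m : ℕ) (hm : 1 ≤ m) :
    ((m + 1 : ℕ) : ℝ) ^ (-α) ≤ (((m:ℕ):ℝ) ^ (1-α) - ((m+1 : ℕ):ℝ) ^ (1-α)) / (α - 1) := by
  have hα1 : (0:ℝ) < α - 1 := by linarith
  have ha : (1:ℝ) ≤ (m:ℝ) := by exact_mod_cast hm
  have ha0 : (0:ℝ) < (m:ℝ) := by linarith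
  set a : ℝ := (m:ℝ) with ha_def
  set b : ℝ := (m:ℝ) + 1 with hb_def
  have hb0 : (0:ℝ) < b := by rw [hb_def]; linarith
  have hcast : ((m + 1 : ℕ) : ℝ) = b := by rw [hb_def]; push_cast; ring
  rw [hcast]
  have hbern : 1 + (α - 1) * (1/a) ≤ (1 + 1/a) ^ (α - 1) := by
    have h0 : (0:ℝ) ≤ 1/a := by positivity
    exact one_add_mul_self_le_rpow_one_add (by linarith) (by linarith)
  have h1 : 1 + (α - 1) / b ≤ (b / a) ^ (α - 1) := by
    have hba : (1:ℝ) + 1/a = b / a := by rw [hb_def]; field_simp; rfl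
    rw [← hba]
    refine le_trans ?_ hbern
    have hab : 1/b ≤ 1/a := by
      apply one_div_le_one_div_of_le ha0
      rw [hb_def]; linarith
    have : (α - 1) / b ≤ (α - 1) * (1/a) := by
      rw [div_eq_mul_one_div]
      exact mul_le_mul_of_nonneg_left hab (by linarith)
    linarith
  have hbpow : (0:ℝ) < b ^ (1 - α) := Real.rpow_pos_of_pos hb0 _
  have h2 : (1 + (α - 1) / b) * b ^ (1-α) ≤ (b / a) ^ (α - 1) * b ^ (1-α) :=
    mul_le_mul_of_nonneg_right h1 hbpow.le
  have hbneg : b ^ (-α) = b ^ (1-α) / b := by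
    rw [show -α = (1-α) - 1 by ring, Real.rpow_sub hb0, Real.rpow_one]
  have hL : (1 + (α - 1) / b) * b ^ (1-α) = b ^ (1-α) + (α-1) * b ^ (-α) := by
    rw [hbneg]; field_simp
  have hR : (b / a) ^ (α - 1) * b ^ (1-α) = a ^ (1-α) := by
    rw [Real.div_rpow hb0.le ha0.le, div_mul_eq_mul_div, ← Real.rpow_add hb0,
      show (α-1)+(1-α) = (0:ℝ) by ring, Real.rpow_zero,
      show (1:ℝ)-α = -(α-1) by ring, Real.rpow_neg ha0.le, one_div]
  rw [hL, hR] at h2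
  rw [le_div_iff₀ hα1]
  linarith

/-- telescoping tail bound: `∑_{s'=1}^n (s₀+s')^{-α} ≤ s₀^{1-α}/(α-1)` -/
lemma tail_sum {α : ℝ} (hα : 2 < α) (s₀ : ℕ) (hs₀ : 1 ≤ s₀) (n : ℕ) :
    ∑ s' ∈ Finset.Icc 1 n, ((s₀ + s' : ℕ) : ℝ) ^ (-α) ≤ (s₀ : ℝ) ^ (1 - α) / (α - 1) := by
  have hα1 : (0:ℝ) < α - 1 := by linarith
  rw [show Finset.Icc 1 n = Finset.Ico 1 (n+1) by rw [Finset.Ico_add_one_right_eq_Icc]]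
  rw [Finset.sum_Ico_eq_sum_range]
  simp only [show n + 1 - 1 = n from rfl]
  have hterm : ∀ k, ((s₀ + (1 + k) : ℕ) : ℝ) ^ (-α)
      ≤ ((((s₀ + k :ℕ)):ℝ) ^ (1-α) - ((s₀+k+1 : ℕ):ℝ) ^ (1-α)) / (α - 1) := by
    intro k
    have h := key_step hα (s₀ + k) (by omega)
    have : s₀ + (1 + k) = (s₀ + k) + 1 := by omega
    rw [this]
    exact h
  calc ∑ k ∈ Finset.range n, ((s₀ + (1 + k) : ℕ) : ℝ) ^ (-α)
      ≤ ∑ k ∈ Finset.range n,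
        ((((s₀ + k :ℕ)):ℝ) ^ (1-α) - ((s₀+k+1 : ℕ):ℝ) ^ (1-α)) / (α - 1) :=
        Finset.sum_le_sum fun k _ => hterm k
  _ = ((((s₀:ℕ)):ℝ) ^ (1-α) - ((s₀+n : ℕ):ℝ) ^ (1-α)) / (α - 1) := by
        rw [← Finset.sum_div]
        congr 1
        have := Finset.sum_range_sub' (fun k => ((s₀ + k : ℕ):ℝ) ^ (1-α)) n
        simp only [show ∀ k, s₀ + (k+1) = s₀ + k + 1 from fun k => rfl] at this
        rw [this, Nat.add_zero]
  _ ≤ (s₀ : ℝ) ^ (1 - α) / (α - 1) := by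
        have h0 : (0:ℝ) ≤ ((s₀ + n : ℕ):ℝ) ^ (1-α) := Real.rpow_nonneg (by positivity) _
        rw [div_le_div_iff_of_pos_right hα1]
        linarith





lemma bonus_mono {β ξ α η : ℝ} (hβ : 0 < β) (hξ : 0 < ξ) (hα : 0 < α) {s : ℕ} (hs : 1 ≤ s)
    {t t' : ℕ} (htt : t ≤ t') : bonus β ξ α η t s ≤ bonus β ξ α η t' s := by
  unfold bonus
  have hspos : (0:ℝ) < (s:ℝ) ^ (1-η) :=
    Real.rpow_pos_of_pos (by exact_mod_cast Nat.lt_of_lt_of_le Nat.zero_lt_one hs) _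
  rw [div_le_div_iff_of_pos_right hspos]
  have h1 : (t:ℝ) ^ (α/ξ) ≤ (t':ℝ) ^ (α/ξ) :=
    Real.rpow_le_rpow (by positivity) (by exact_mod_cast htt) (by positivity)
  exact mul_le_mul_of_nonneg_left h1 (Real.rpow_nonneg hβ.le _)

lemma z_pow {β ξ α : ℝ} (hβ : 0 < β) (hξ : 0 < ξ) (m : ℕ) (hm : 1 ≤ m) :
    (β ^ (1/ξ) * (m:ℝ) ^ (α/ξ)) ^ ξ = β * (m:ℝ) ^ α := by
  have hm0 : (0:ℝ) < (m:ℝ) := by exact_mod_cast hm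
  rw [Real.mul_rpow (Real.rpow_nonneg hβ.le _) (Real.rpow_nonneg hm0.le _),
    ← Real.rpow_mul hβ.le, ← Real.rpow_mul hm0.le,
    one_div_mul_cancel hξ.ne', div_mul_cancel₀ _ hξ.ne', Real.rpow_one]

lemma one_le_z {β ξ α : ℝ} (hβ : 1 ≤ β) (hξ : 0 < ξ) (hα : 0 ≤ α) (m : ℕ) (hm : 1 ≤ m) :
    1 ≤ β ^ (1/ξ) * (m:ℝ) ^ (α/ξ) := by
  have h1 : (1:ℝ) ≤ β ^ (1/ξ) := Real.one_le_rpow hβ (by positivity)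
  have h2 : (1:ℝ) ≤ (m:ℝ) ^ (α/ξ) :=
    Real.one_le_rpow (by exact_mod_cast hm) (by positivity)
  nlinarith

lemma beta_div_z {β ξ α : ℝ} (hβ : 0 < β) (hξ : 0 < ξ) (m : ℕ) (hm : 1 ≤ m) :
    β / (β ^ (1/ξ) * (m:ℝ) ^ (α/ξ)) ^ ξ = (m:ℝ) ^ (-α) := by
  have hm0 : (0:ℝ) < (m:ℝ) := by exact_mod_cast hm
  rw [z_pow hβ hξ m hm, Real.rpow_neg hm0.le]
  rw [div_mul_eq_div_div, div_self hβ.ne', one_div]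

lemma mul_bonus {β ξ α η : ℝ} (hη : η < 1) {s : ℕ} (hs : 1 ≤ s) (t : ℕ) :
    (s:ℝ) * bonus β ξ α η t s = (s:ℝ) ^ η * (β ^ (1/ξ) * (t:ℝ) ^ (α/ξ)) := by
  have hs0 : (0:ℝ) < (s:ℝ) := by exact_mod_cast hs
  unfold bonus
  have hsη : (s:ℝ) ^ η = (s:ℝ) ^ (1:ℝ) / (s:ℝ) ^ (1-η) := by
    rw [← Real.rpow_sub hs0]; norm_num
  rw [hsη, Real.rpow_one]
  ring




lemma arm_bound {α : ℝ} (hα : 2 < α) {w : ℝ} (hw : 1 ≤ w) (s₀ : ℕ)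
    (hs₀ : w + 1 ≤ (s₀:ℝ)) :
    (s₀:ℝ)^(-α) + (s₀:ℝ)^(1-α)/(α-1) ≤ 2/((α-1) * w^(α-1)) := by
  have hw0 : (0:ℝ) < w := by linarith
  have hs0 : (0:ℝ) < (s₀:ℝ) := by linarith
  have hα1 : (0:ℝ) < α - 1 := by linarith
  have hwpow : (0:ℝ) < w ^ (α-1) := Real.rpow_pos_of_pos hw0 _
  -- first part
  have h1 : (s₀:ℝ)^(1-α) ≤ w^(1-α) :=
    Real.rpow_le_rpow_of_nonpos hw0 (by linarith) (by linarith)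
  have hw1α : w^(1-α) = (w^(α-1))⁻¹ := by
    rw [show (1:ℝ)-α = -(α-1) by ring, Real.rpow_neg hw0.le]
  have part1 : (s₀:ℝ)^(1-α)/(α-1) ≤ 1/((α-1) * w^(α-1)) := by
    rw [div_le_div_iff₀ (by linarith) (by positivity)]
    calc (s₀:ℝ)^(1-α) * ((α-1) * w^(α-1)) ≤ w^(1-α) * ((α-1) * w^(α-1)) := by
          exact mul_le_mul_of_nonneg_right h1 (by positivity)
    _ = 1 * (α-1) := by rw [hw1α]; field_simp
  -- second part : (α-1) * w^(α-1) ≤ s₀^α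
  have hinvw : (0:ℝ) ≤ 1/w := by positivity
  have hbern : 1 + (α-1) * (1/w) ≤ (1 + 1/w)^(α-1) :=
    one_add_mul_self_le_rpow_one_add (by linarith) (by linarith)
  have hsplit : (w+1)^α = (w+1) * (w^(α-1) * (1+1/w)^(α-1)) := by
    rw [← Real.mul_rpow hw0.le (by positivity)]
    have : w * (1 + 1/w) = w + 1 := by field_simp
    rw [this, show α = 1 + (α-1) by ring, Real.rpow_add (by linarith), Real.rpow_one]
    ring_nf
  have h2 : (α-1) * w^(α-1) ≤ (w+1)^α := by
    rw [hsplit]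
    have hkey : (α-1) ≤ (w+1) * (1 + (α-1) * (1/w)) := by
      have : (w+1) * ((α-1) * (1/w)) ≥ (α-1) := by
        rw [ge_iff_le, mul_comm (α-1) (1/w), ← mul_assoc]
        have : 1 ≤ (w+1) * (1/w) := by
          rw [mul_one_div, le_div_iff₀ hw0]; linarith
        nlinarith
      nlinarith
    calc (α-1) * w^(α-1) ≤ ((w+1) * (1 + (α-1) * (1/w))) * w^(α-1) :=
          mul_le_mul_of_nonneg_right hkey hwpow.le
    _ ≤ ((w+1) * (1 + 1/w)^(α-1)) * w^(α-1) := by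
          have : (0:ℝ) < w + 1 := by linarith
          have := mul_le_mul_of_nonneg_left hbern this.le
          nlinarith [hwpow]
    _ = (w+1) * (w^(α-1) * (1+1/w)^(α-1)) := by ring
  have h3 : (w+1)^α ≤ (s₀:ℝ)^α := Real.rpow_le_rpow (by linarith) hs₀ (by linarith)
  have part2 : (s₀:ℝ)^(-α) ≤ 1/((α-1) * w^(α-1)) := by
    rw [Real.rpow_neg hs0.le, inv_eq_one_div]
    exact one_div_le_one_div_of_le (by positivity) (le_trans h2 h3)
  calc (s₀:ℝ)^(-α) + (s₀:ℝ)^(1-α)/(α-1)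
      ≤ 1/((α-1) * w^(α-1)) + 1/((α-1) * w^(α-1)) := add_le_add part2 part1
  _ = 2/((α-1) * w^(α-1)) := by ring




lemma bonus_small {β ξ η α Δ : ℝ} (hβ : 1 < β) (hξ : 0 < ξ) (hη' : η < 1)
    (hα : 0 < α) (hΔ : 0 < Δ) {n t s : ℕ} (ht : t ≤ n) (hs1 : 1 ≤ s)
    (hs : (2*β^(1/ξ)/Δ)^(1/(1-η)) * (n:ℝ)^(α/(ξ*(1-η))) ≤ (s:ℝ)) :
    2 * bonus β ξ α η t s ≤ Δ := by
  have hβ0 : (0:ℝ) < β := by linarith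
  have hβξ : (0:ℝ) < β^(1/ξ) := Real.rpow_pos_of_pos hβ0 _
  have hc : (0:ℝ) < 2*β^(1/ξ)/Δ := by positivity
  set c : ℝ := 2*β^(1/ξ)/Δ with hc_def
  have h1η : (0:ℝ) < 1 - η := by linarith
  have hspos : (0:ℝ) < (s:ℝ) := by exact_mod_cast hs1
  have hspow : (0:ℝ) < (s:ℝ)^(1-η) := Real.rpow_pos_of_pos hspos _
  rw [bonus, mul_div_assoc', div_le_iff₀ hspow]
  have hkey : c * (t:ℝ)^(α/ξ) ≤ (s:ℝ)^(1-η) := by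
    have hbase : (0:ℝ) ≤ c^(1/(1-η)) * (n:ℝ)^(α/(ξ*(1-η))) := by positivity
    have h2 : (c^(1/(1-η)) * (n:ℝ)^(α/(ξ*(1-η))))^(1-η) ≤ (s:ℝ)^(1-η) :=
      Real.rpow_le_rpow hbase hs h1η.le
    have h3 : (c^(1/(1-η)) * (n:ℝ)^(α/(ξ*(1-η))))^(1-η) = c * (n:ℝ)^(α/ξ) := by
      rw [Real.mul_rpow (by positivity) (by positivity),
        ← Real.rpow_mul hc.le, ← Real.rpow_mul (Nat.cast_nonneg n),
        one_div_mul_cancel h1η.ne', Real.rpow_one]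
      congr 2
      field_simp
    have h4 : (t:ℝ)^(α/ξ) ≤ (n:ℝ)^(α/ξ) :=
      Real.rpow_le_rpow (Nat.cast_nonneg t) (by exact_mod_cast ht) (by positivity)
    calc c * (t:ℝ)^(α/ξ) ≤ c * (n:ℝ)^(α/ξ) := by nlinarith
    _ = (c^(1/(1-η)) * (n:ℝ)^(α/(ξ*(1-η))))^(1-η) := h3.symm
    _ ≤ (s:ℝ)^(1-η) := h2
  have hΔc : Δ * c = 2 * β^(1/ξ) := by
    rw [hc_def]; field_simp
  have hmul := mul_le_mul_of_nonneg_left hkey hΔ.le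
  nlinarith [hmul, hΔc]




lemma reward_close {Ω : Type*} {K : ℕ} (X : Fin K → ℕ → Ω → ℝ) (I : ℕ → Ω → Fin K)
    (istar : Fin K) {R : ℝ} (hXbdd : ∀ i t ω, |X i t ω| ≤ R) (n : ℕ) (ω : Ω)
    (hn : 1 ≤ n) :
    |(n:ℝ) * rewardAvg X I n ω - (n:ℝ) * empAvg X istar n ω|
      ≤ 2 * R * ∑ j ∈ Finset.univ.erase istar, (playCount I j n ω : ℝ) := by
  classical
  have hR0 : 0 ≤ R := le_trans (abs_nonneg _) (hXbdd istar 1 ω)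
  set T : Fin K → ℕ := fun j => playCount I j n ω with hT
  have hTle : T istar ≤ n := playCount_le I istar ω n
  have hRA : (n:ℝ) * rewardAvg X I n ω
      = ∑ j : Fin K, ∑ t ∈ Finset.Icc 1 (T j), X j t ω := by
    rw [rewardAvg, mul_div_cancel₀ _ (by exact_mod_cast Nat.one_le_iff_ne_zero.mp hn : (n:ℝ) ≠ 0)]
    exact Finset.sum_congr rfl fun j _ => mul_empAvg X j ω (T j)
  have hEA : (n:ℝ) * empAvg X istar n ω
      = (∑ t ∈ Finset.Icc 1 (T istar), X istar t ω)
        + ∑ t ∈ Finset.Ioc (T istar) n, X istar t ω := by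
    rw [mul_empAvg]
    rw [show Finset.Icc 1 n = Finset.Ioc 0 n from Finset.Icc_add_one_left_eq_Ioc 0 n,
      show Finset.Icc 1 (T istar) = Finset.Ioc 0 (T istar) from Finset.Icc_add_one_left_eq_Ioc 0 _]
    exact (Finset.sum_Ioc_consecutive _ (Nat.zero_le _) hTle).symm
  have hsum : ∑ j : Fin K, ∑ t ∈ Finset.Icc 1 (T j), X j t ω
      = (∑ t ∈ Finset.Icc 1 (T istar), X istar t ω)
        + ∑ j ∈ Finset.univ.erase istar, ∑ t ∈ Finset.Icc 1 (T j), X j t ω := by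
    rw [← Finset.add_sum_erase _ _ (Finset.mem_univ istar)]
  have hdiff : (n:ℝ) * rewardAvg X I n ω - (n:ℝ) * empAvg X istar n ω
      = (∑ j ∈ Finset.univ.erase istar, ∑ t ∈ Finset.Icc 1 (T j), X j t ω)
        - ∑ t ∈ Finset.Ioc (T istar) n, X istar t ω := by
    rw [hRA, hEA, hsum]; ring
  rw [hdiff]
  have hcard1 : ∀ j : Fin K, ((Finset.Icc 1 (T j)).card : ℝ) = (T j : ℝ) := by
    intro j; rw [Nat.card_Icc]; norm_num
  have h1 : |∑ j ∈ Finset.univ.erase istar, ∑ t ∈ Finset.Icc 1 (T j), X j t ω|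
      ≤ R * ∑ j ∈ Finset.univ.erase istar, (T j : ℝ) := by
    calc |∑ j ∈ Finset.univ.erase istar, ∑ t ∈ Finset.Icc 1 (T j), X j t ω|
        ≤ ∑ j ∈ Finset.univ.erase istar, |∑ t ∈ Finset.Icc 1 (T j), X j t ω| :=
          Finset.abs_sum_le_sum_abs _ _
    _ ≤ ∑ j ∈ Finset.univ.erase istar, R * (T j : ℝ) := by
          refine Finset.sum_le_sum fun j _ => ?_
          have := abs_sum_le X j ω (fun t => hXbdd j t ω) (Finset.Icc 1 (T j))
          rwa [hcard1 j] at this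
    _ = R * ∑ j ∈ Finset.univ.erase istar, (T j : ℝ) := by rw [Finset.mul_sum]
  have h2 : |∑ t ∈ Finset.Ioc (T istar) n, X istar t ω|
      ≤ R * ∑ j ∈ Finset.univ.erase istar, (T j : ℝ) := by
    have hc := abs_sum_le X istar ω (fun t => hXbdd istar t ω) (Finset.Ioc (T istar) n)
    rw [Nat.card_Ioc] at hc
    have hsumT : ∑ j ∈ Finset.univ.erase istar, (T j : ℝ) = ((n - T istar : ℕ) : ℝ) := by
      have := sum_playCount I ω n
      rw [← Finset.add_sum_erase _ T (Finset.mem_univ istar)] at this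
      have : ∑ j ∈ Finset.univ.erase istar, T j = n - T istar := by omega
      rw [← this]
      push_cast
      rfl
    rw [hsumT]
    exact hc
  calc |(∑ j ∈ Finset.univ.erase istar, ∑ t ∈ Finset.Icc 1 (T j), X j t ω)
        - ∑ t ∈ Finset.Ioc (T istar) n, X istar t ω|
      ≤ |∑ j ∈ Finset.univ.erase istar, ∑ t ∈ Finset.Icc 1 (T j), X j t ω|
        + |∑ t ∈ Finset.Ioc (T istar) n, X istar t ω| := abs_sub _ _
  _ ≤ R * (∑ j ∈ Finset.univ.erase istar, (T j : ℝ))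
        + R * ∑ j ∈ Finset.univ.erase istar, (T j : ℝ) := add_le_add h1 h2
  _ = 2 * R * ∑ j ∈ Finset.univ.erase istar, (T j : ℝ) := by ring


end UCBaux
namespace UCBaux

lemma count_tail {Ω : Type*} [MeasurableSpace Ω] (P : MeasureTheory.Measure Ω)
    {K : ℕ} (X : Fin K → ℕ → Ω → ℝ) (I : ℕ → Ω → Fin K)
    (μ : Fin K → ℝ) {β ξ η α : ℝ}
    (hβ : 1 < β) (hξ : 0 < ξ) (hη' : η < 1) (hα2 : 2 < α)
    (hconc : ∀ i : Fin K, ∀ n : ℕ, 1 ≤ n → ∀ z : ℝ, 1 ≤ z →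
      P {ω | (n : ℝ) * empAvg X i n ω - n * μ i ≥ (n : ℝ) ^ η * z}
        ≤ ENNReal.ofReal (β / z ^ ξ) ∧
      P {ω | (n : ℝ) * empAvg X i n ω - n * μ i ≤ -((n : ℝ) ^ η * z)}
        ≤ ENNReal.ofReal (β / z ^ ξ))
    (istar : Fin K)
    (hPolicy : ∀ t : ℕ, 1 ≤ t → ∀ ω : Ω, ∀ j : Fin K,
      ucbIdxE X β ξ α η I j (t - 1) ω ≤ ucbIdxE X β ξ α η I (I t ω) (t - 1) ω)
    {Δmin : ℝ} (hΔpos : 0 < Δmin)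
    (hΔmin_le : ∀ j, j ≠ istar → Δmin ≤ μ istar - μ j)
    {i : Fin K} (hii : i ≠ istar)
    {n s₀ : ℕ} (hn1 : 1 ≤ n) (hs₀1 : 1 ≤ s₀)
    (hcA : (2 * β ^ (1 / ξ) / Δmin) ^ (1 / (1 - η)) * (n : ℝ) ^ (α / (ξ * (1 - η)))
      ≤ (s₀ : ℝ)) :
    P {ω | s₀ + 1 ≤ playCount I i n ω}
      ≤ ENNReal.ofReal ((s₀:ℝ)^(-α) + (s₀:ℝ)^(1-α)/(α-1)) := by
  classical
  have hβ0 : (0:ℝ) < β := by linarith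
  have hα0 : (0:ℝ) < α := by linarith
  set z₀ : ℝ := β^(1/ξ) * (s₀:ℝ)^(α/ξ) with hz₀
  set Devi : Set Ω :=
    {ω | (s₀:ℝ) * empAvg X i s₀ ω - s₀ * μ i ≥ (s₀:ℝ)^η * z₀} with hDevi
  set DevS : ℕ → Set Ω := fun s' =>
    {ω | (s':ℝ) * empAvg X istar s' ω - s' * μ istar
      ≤ -((s':ℝ)^η * (β^(1/ξ) * ((s₀ + s' : ℕ):ℝ)^(α/ξ)))} with hDevS
  have hsub : {ω | s₀ + 1 ≤ playCount I i n ω}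
      ⊆ Devi ∪ ⋃ s' ∈ Finset.Icc 1 n, DevS s' := by
    intro ω hω
    obtain ⟨t, ht1, htn, htI, hts⟩ := exists_hit I i ω (show s₀ < playCount I i n ω from hω)
    have hpol := hPolicy t ht1 ω istar
    rw [htI] at hpol
    set s' : ℕ := playCount I istar (t-1) ω with hs'
    have hs'1 : 1 ≤ s' := by
      rcases Nat.eq_zero_or_pos s' with h0 | h
      · exfalso
        rw [ucbIdxE, ucbIdxE, ← hs', h0, if_pos rfl, hts, if_neg (by omega)] at hpol
        exact EReal.coe_ne_top _ (top_le_iff.mp hpol)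
      · exact h
    -- real-valued comparison
    rw [ucbIdxE, ucbIdxE, ← hs', if_neg (by omega), hts, if_neg (by omega),
      EReal.coe_le_coe_iff] at hpol
    rw [ucbIdx, ucbIdx] at hpol
    -- time bounds
    have htsum : s₀ + s' ≤ t - 1 := by
      have h1 : ∑ j ∈ ({i, istar} : Finset (Fin K)), playCount I j (t-1) ω
          ≤ ∑ j : Fin K, playCount I j (t-1) ω :=
        Finset.sum_le_sum_of_subset (Finset.subset_univ _)
      rw [Finset.sum_pair hii, sum_playCount] at h1
      omega
    have htn' : t - 1 ≤ n := by omega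
    have hts₀ : s₀ ≤ t - 1 := by omega
    -- bonus smallness
    have h2B : 2 * bonus β ξ α η (t-1) s₀ ≤ Δmin :=
      bonus_small hβ hξ hη' hα0 hΔpos htn' hs₀1 hcA
    by_cases hdev : bonus β ξ α η (t-1) s₀ ≤ empAvg X i s₀ ω - μ i
    · left
      have hmono : bonus β ξ α η s₀ s₀ ≤ bonus β ξ α η (t-1) s₀ :=
        bonus_mono hβ0 hξ hα0 hs₀1 hts₀
      have hmul : (s₀:ℝ) * bonus β ξ α η s₀ s₀ = (s₀:ℝ)^η * z₀ :=
        mul_bonus hη' hs₀1 s₀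
      have hs₀pos : (0:ℝ) < (s₀:ℝ) := by exact_mod_cast hs₀1
      have : (s₀:ℝ) * (empAvg X i s₀ ω - μ i) ≥ (s₀:ℝ) * bonus β ξ α η s₀ s₀ := by
        have := le_trans hmono hdev
        nlinarith
      show (s₀:ℝ) * empAvg X i s₀ ω - s₀ * μ i ≥ (s₀:ℝ)^η * z₀
      rw [← hmul]
      nlinarith
    · right
      push_neg at hdev
      have hs'le : s' ≤ n := le_trans (playCount_le I istar ω (t-1)) htn'
      refine Set.mem_biUnion (Finset.mem_Icc.mpr ⟨hs'1, hs'le⟩) ?_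
      have hmono : bonus β ξ α η (s₀ + s') s' ≤ bonus β ξ α η (t-1) s' :=
        bonus_mono hβ0 hξ hα0 hs'1 htsum
      have hμ : Δmin ≤ μ istar - μ i := hΔmin_le i hii
      have hkey : empAvg X istar s' ω - μ istar < -bonus β ξ α η (t-1) s' := by
        nlinarith
      have hmul : (s':ℝ) * bonus β ξ α η (s₀+s') s' = (s':ℝ)^η * (β^(1/ξ) * ((s₀+s':ℕ):ℝ)^(α/ξ)) :=
        mul_bonus hη' hs'1 (s₀+s')
      have hs'pos : (0:ℝ) < (s':ℝ) := by exact_mod_cast hs'1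
      show (s':ℝ) * empAvg X istar s' ω - s' * μ istar
        ≤ -((s':ℝ)^η * (β^(1/ξ) * ((s₀ + s' : ℕ):ℝ)^(α/ξ)))
      rw [← hmul]
      nlinarith
  -- measure bound
  have hz₀1 : 1 ≤ z₀ := one_le_z hβ.le hξ hα0.le s₀ hs₀1
  have hDevi_bound : P Devi ≤ ENNReal.ofReal ((s₀:ℝ)^(-α)) := by
    have := (hconc i s₀ hs₀1 z₀ hz₀1).1
    rwa [beta_div_z hβ0 hξ s₀ hs₀1] at this
  have hDevS_bound : ∀ s' ∈ Finset.Icc 1 n,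
      P (DevS s') ≤ ENNReal.ofReal (((s₀ + s' : ℕ):ℝ)^(-α)) := by
    intro s' hmem
    have hs'1 : 1 ≤ s' := (Finset.mem_Icc.mp hmem).1
    have hz1 : 1 ≤ β^(1/ξ) * ((s₀+s':ℕ):ℝ)^(α/ξ) :=
      one_le_z hβ.le hξ hα0.le (s₀+s') (by omega)
    have := (hconc istar s' hs'1 _ hz1).2
    rwa [beta_div_z hβ0 hξ (s₀+s') (by omega)] at this
  calc P {ω | s₀ + 1 ≤ playCount I i n ω}
      ≤ P (Devi ∪ ⋃ s' ∈ Finset.Icc 1 n, DevS s') := measure_mono hsub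
  _ ≤ P Devi + P (⋃ s' ∈ Finset.Icc 1 n, DevS s') := measure_union_le _ _
  _ ≤ ENNReal.ofReal ((s₀:ℝ)^(-α)) + ∑ s' ∈ Finset.Icc 1 n, P (DevS s') := by
      exact add_le_add hDevi_bound (measure_biUnion_finset_le _ _)
  _ ≤ ENNReal.ofReal ((s₀:ℝ)^(-α))
        + ∑ s' ∈ Finset.Icc 1 n, ENNReal.ofReal (((s₀ + s' : ℕ):ℝ)^(-α)) := by
      gcongr with s' hs'
      exact hDevS_bound s' hs'
  _ = ENNReal.ofReal ((s₀:ℝ)^(-α))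
        + ENNReal.ofReal (∑ s' ∈ Finset.Icc 1 n, ((s₀ + s' : ℕ):ℝ)^(-α)) := by
      rw [ENNReal.ofReal_sum_of_nonneg
        (fun s' _ => Real.rpow_nonneg (Nat.cast_nonneg _) _)]
  _ ≤ ENNReal.ofReal ((s₀:ℝ)^(-α) + (s₀:ℝ)^(1-α)/(α-1)) := by
      rw [← ENNReal.ofReal_add (Real.rpow_nonneg (Nat.cast_nonneg _) _)
        (Finset.sum_nonneg fun s' _ => Real.rpow_nonneg (Nat.cast_nonneg _) _)]
      exact ENNReal.ofReal_le_ofReal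
        (by linarith [tail_sum hα2 s₀ hs₀1 n])

end UCBaux

set_option maxHeartbeats 2000000 in
/-- Lemma 3: polynomial concentration of the collected reward under the UCB policy. -/
theorem ucb_reward_concentration
    {Ω : Type*} [MeasurableSpace Ω] (P : Measure Ω) [IsProbabilityMeasure P]
    (K : ℕ) (hK : 2 ≤ K) (R : ℝ) (hR : 0 < R)
    (X : Fin K → ℕ → Ω → ℝ)
    (hXmeas : ∀ i t, Measurable (X i t))
    (hXbdd : ∀ i t ω, |X i t ω| ≤ R)
    (μ : Fin K → ℝ)
    (hconv : ∀ i, Filter.Tendsto (fun n => ∫ ω, empAvg X i n ω ∂P)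
      Filter.atTop (nhds (μ i)))
    (β ξ η α : ℝ) (hβ : 1 < β) (hξ : 0 < ξ) (hη : 1 / 2 ≤ η) (hη' : η < 1)
    (hα2 : 2 < α) (hαlow : ξ * η * (1 - η) ≤ α) (hαhigh : α < ξ * (1 - η))
    (hconc : ∀ i : Fin K, ∀ n : ℕ, 1 ≤ n → ∀ z : ℝ, 1 ≤ z →
      P {ω | (n : ℝ) * empAvg X i n ω - n * μ i ≥ (n : ℝ) ^ η * z}
        ≤ ENNReal.ofReal (β / z ^ ξ) ∧
      P {ω | (n : ℝ) * empAvg X i n ω - n * μ i ≤ -((n : ℝ) ^ η * z)}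
        ≤ ENNReal.ofReal (β / z ^ ξ))
    (istar : Fin K) (hopt : ∀ j, j ≠ istar → μ j < μ istar)
    (I : ℕ → Ω → Fin K)
    (hImeas : ∀ t, Measurable (I t))
    (hPolicy : ∀ t : ℕ, 1 ≤ t → ∀ ω : Ω, ∀ j : Fin K,
      ucbIdxE X β ξ α η I j (t - 1) ω ≤ ucbIdxE X β ξ α η I (I t ω) (t - 1) ω)
    (Δmin : ℝ)
    (hΔmin_le : ∀ j, j ≠ istar → Δmin ≤ μ istar - μ j)
    (hΔmin_ex : ∃ j, j ≠ istar ∧ Δmin = μ istar - μ j)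
    (hΔβ : 1 < 2 * β ^ (1 / ξ) / Δmin)
    (A : ℕ → ℕ)
    (hA : ∀ n : ℕ,
      A n = ⌈(2 * β ^ (1 / ξ) / Δmin) ^ (1 / (1 - η)) * (n : ℝ) ^ (α / (ξ * (1 - η)))⌉₊)
    (Np : ℕ)
    (hNp : 1 ≤ Np ∧ A Np ≤ Np ∧ ∀ t : ℕ, 1 ≤ t → A t ≤ t → Np ≤ t)
    (n : ℕ) (hn : Np ≤ n) (x : ℝ) (hx : 1 ≤ x) :
    P {ω | (n : ℝ) * rewardAvg X I n ω - n * μ istar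
        ≥ ((n : ℝ) ^ η + 2 * R * ((K : ℝ) - 1) * (3 + (A n : ℝ))) * x}
      ≤ ENNReal.ofReal (β / x ^ ξ
          + 2 * ((K : ℝ) - 1) / ((α - 1) * ((1 + (A n : ℝ)) * x) ^ (α - 1))) ∧
    P {ω | (n : ℝ) * rewardAvg X I n ω - n * μ istar
        ≤ -(((n : ℝ) ^ η + 2 * R * ((K : ℝ) - 1) * (3 + (A n : ℝ))) * x)}
      ≤ ENNReal.ofReal (β / x ^ ξ
          + 2 * ((K : ℝ) - 1) / ((α - 1) * ((1 + (A n : ℝ)) * x) ^ (α - 1))) := by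
  classical
  have hn1 : 1 ≤ n := le_trans hNp.1 hn
  have hβ0 : (0:ℝ) < β := by linarith
  have hΔpos : 0 < Δmin := by
    obtain ⟨j, hj, hEq⟩ := hΔmin_ex
    have := hopt j hj
    rw [hEq]; linarith
  have hKR : (2:ℝ) ≤ (K:ℝ) := by exact_mod_cast hK
  have hA0 : (0:ℝ) ≤ (A n : ℝ) := Nat.cast_nonneg _
  set w : ℝ := (1 + (A n : ℝ)) * x with hw_def
  have hw1 : 1 ≤ w := by nlinarith
  set s₀ : ℕ := ⌈w⌉₊ + 1 with hs₀_def
  have hceil : w ≤ (⌈w⌉₊ : ℝ) := Nat.le_ceil w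
  have hceil2 : (⌈w⌉₊ : ℝ) < w + 1 := Nat.ceil_lt_add_one (by linarith)
  have hs₀w : w + 1 ≤ (s₀:ℝ) := by rw [hs₀_def]; push_cast; linarith
  have hs₀lt : (s₀:ℝ) < w + 2 := by rw [hs₀_def]; push_cast; linarith
  have hs₀1 : 1 ≤ s₀ := by omega
  have hcA : (2 * β ^ (1 / ξ) / Δmin) ^ (1 / (1 - η)) * (n : ℝ) ^ (α / (ξ * (1 - η)))
      ≤ (s₀ : ℝ) := by
    have h1 := Nat.le_ceil
      ((2 * β ^ (1 / ξ) / Δmin) ^ (1 / (1 - η)) * (n : ℝ) ^ (α / (ξ * (1 - η))))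
    rw [← hA n] at h1
    have h2 : (A n : ℝ) ≤ w := by nlinarith
    linarith
  set b : ℝ := 2 / ((α - 1) * w ^ (α - 1)) with hb_def
  have hbpos : 0 ≤ b := by
    rw [hb_def]
    have hwp : (0:ℝ) < w ^ (α-1) := Real.rpow_pos_of_pos (by linarith) _
    have hα1 : (0:ℝ) < α - 1 := by linarith
    positivity
  set C : Fin K → Set Ω := fun i => {ω | s₀ + 1 ≤ playCount I i n ω} with hC_def
  have hCb : ∀ i ∈ Finset.univ.erase istar, P (C i) ≤ ENNReal.ofReal b := by
    intro i hi
    have hii : i ≠ istar := Finset.ne_of_mem_erase hi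
    refine le_trans (UCBaux.count_tail P X I μ hβ hξ hη' hα2 hconc istar hPolicy
      hΔpos hΔmin_le hii hn1 hs₀1 hcA) ?_
    exact ENNReal.ofReal_le_ofReal (UCBaux.arm_bound hα2 hw1 s₀ hs₀w)
  have hKcard : (Finset.univ.erase istar).card = K - 1 := by
    rw [Finset.card_erase_of_mem (Finset.mem_univ _), Finset.card_univ, Fintype.card_fin]
  -- bound for the sum of suboptimal play counts outside the bad count events
  have hsum_counts : ∀ ω : Ω, ω ∉ (⋃ i ∈ Finset.univ.erase istar, C i) →
      2 * R * ∑ j ∈ Finset.univ.erase istar, (playCount I j n ω : ℝ)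
        ≤ 2 * R * ((K:ℝ) - 1) * (3 + (A n : ℝ)) * x := by
    intro ω hω
    have hple : ∀ j ∈ Finset.univ.erase istar, (playCount I j n ω : ℝ) ≤ (s₀:ℝ) := by
      intro j hj
      have : ω ∉ C j := fun hmem => hω (Set.mem_biUnion hj hmem)
      rw [hC_def] at this
      simp only [Set.mem_setOf_eq, not_le] at this
      exact_mod_cast Nat.lt_succ_iff.mp this
    have h1 : ∑ j ∈ Finset.univ.erase istar, (playCount I j n ω : ℝ)
        ≤ ((K:ℝ) - 1) * (s₀:ℝ) := by
      calc ∑ j ∈ Finset.univ.erase istar, (playCount I j n ω : ℝ)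
          ≤ ∑ j ∈ Finset.univ.erase istar, (s₀:ℝ) := Finset.sum_le_sum hple
      _ = ((Finset.univ.erase istar).card : ℝ) * (s₀:ℝ) := by
          rw [Finset.sum_const, nsmul_eq_mul]
      _ = ((K:ℝ) - 1) * (s₀:ℝ) := by
          rw [hKcard]
          congr 1
          push_cast [Nat.cast_sub (by omega : 1 ≤ K)]
          ring
    have hs₀3 : (s₀:ℝ) ≤ (3 + (A n : ℝ)) * x := by
      have : w + 2 ≤ (3 + (A n : ℝ)) * x := by rw [hw_def]; nlinarith
      linarith
    have hK1 : (0:ℝ) ≤ (K:ℝ) - 1 := by linarith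
    calc 2 * R * ∑ j ∈ Finset.univ.erase istar, (playCount I j n ω : ℝ)
        ≤ 2 * R * (((K:ℝ) - 1) * (s₀:ℝ)) :=
          mul_le_mul_of_nonneg_left h1 (by linarith)
    _ ≤ 2 * R * (((K:ℝ) - 1) * ((3 + (A n : ℝ)) * x)) :=
          mul_le_mul_of_nonneg_left
            (mul_le_mul_of_nonneg_left hs₀3 hK1) (by linarith)
    _ = 2 * R * ((K:ℝ) - 1) * (3 + (A n : ℝ)) * x := by ring
  -- final measure bound, shared
  have hfinal : ∀ S : Set Ω,
      P S ≤ ENNReal.ofReal (β / x ^ ξ) + ∑ i ∈ Finset.univ.erase istar, P (C i) →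
      P S ≤ ENNReal.ofReal (β / x ^ ξ
          + 2 * ((K : ℝ) - 1) / ((α - 1) * ((1 + (A n : ℝ)) * x) ^ (α - 1))) := by
    intro S hS
    have hx0 : 0 ≤ β / x ^ ξ := by positivity
    calc P S ≤ ENNReal.ofReal (β / x ^ ξ) + ∑ i ∈ Finset.univ.erase istar, P (C i) := hS
    _ ≤ ENNReal.ofReal (β / x ^ ξ)
        + ∑ _i ∈ Finset.univ.erase istar, ENNReal.ofReal b := by
        gcongr with i hi
        exact hCb i hi
    _ = ENNReal.ofReal (β / x ^ ξ) + ENNReal.ofReal (((K - 1 : ℕ):ℝ) * b) := by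
        rw [Finset.sum_const, hKcard, nsmul_eq_mul, ← ENNReal.ofReal_natCast (K-1),
          ← ENNReal.ofReal_mul (Nat.cast_nonneg _)]
    _ = ENNReal.ofReal (β / x ^ ξ + ((K - 1 : ℕ):ℝ) * b) :=
        (ENNReal.ofReal_add hx0 (mul_nonneg (Nat.cast_nonneg _) hbpos)).symm
    _ = ENNReal.ofReal (β / x ^ ξ
          + 2 * ((K : ℝ) - 1) / ((α - 1) * ((1 + (A n : ℝ)) * x) ^ (α - 1))) := by
        congr 1
        rw [hb_def, Nat.cast_sub (by omega : 1 ≤ K)]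
        push_cast
        ring
  constructor
  · apply hfinal
    have hsub : {ω | (n : ℝ) * rewardAvg X I n ω - n * μ istar
        ≥ ((n : ℝ) ^ η + 2 * R * ((K : ℝ) - 1) * (3 + (A n : ℝ))) * x}
        ⊆ {ω | (n : ℝ) * empAvg X istar n ω - n * μ istar ≥ (n : ℝ) ^ η * x}
          ∪ ⋃ i ∈ Finset.univ.erase istar, C i := by
      intro ω hω
      rw [Set.mem_union]
      by_contra hcon
      push_neg at hcon
      obtain ⟨hg, hc⟩ := hcon
      simp only [Set.mem_setOf_eq, ge_iff_le, not_le] at hg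
      have hclose := UCBaux.reward_close X I istar hXbdd n ω hn1
      have hcounts := hsum_counts ω hc
      have habs := abs_le.mp hclose
      simp only [Set.mem_setOf_eq, ge_iff_le] at hω
      linarith [habs.1, habs.2]
    calc P _ ≤ P ({ω | (n : ℝ) * empAvg X istar n ω - n * μ istar ≥ (n : ℝ) ^ η * x}
          ∪ ⋃ i ∈ Finset.univ.erase istar, C i) := measure_mono hsub
    _ ≤ P {ω | (n : ℝ) * empAvg X istar n ω - n * μ istar ≥ (n : ℝ) ^ η * x}
          + P (⋃ i ∈ Finset.univ.erase istar, C i) := measure_union_le _ _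
    _ ≤ ENNReal.ofReal (β / x ^ ξ) + ∑ i ∈ Finset.univ.erase istar, P (C i) :=
        add_le_add ((hconc istar n hn1 x hx).1) (measure_biUnion_finset_le _ _)
  · apply hfinal
    have hsub : {ω | (n : ℝ) * rewardAvg X I n ω - n * μ istar
        ≤ -(((n : ℝ) ^ η + 2 * R * ((K : ℝ) - 1) * (3 + (A n : ℝ))) * x)}
        ⊆ {ω | (n : ℝ) * empAvg X istar n ω - n * μ istar ≤ -((n : ℝ) ^ η * x)}
          ∪ ⋃ i ∈ Finset.univ.erase istar, C i := by
      intro ω hω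
      rw [Set.mem_union]
      by_contra hcon
      push_neg at hcon
      obtain ⟨hg, hc⟩ := hcon
      simp only [Set.mem_setOf_eq, not_le] at hg
      have hclose := UCBaux.reward_close X I istar hXbdd n ω hn1
      have hcounts := hsum_counts ω hc
      have habs := abs_le.mp hclose
      simp only [Set.mem_setOf_eq] at hω
      linarith [habs.1, habs.2]
    calc P _ ≤ P ({ω | (n : ℝ) * empAvg X istar n ω - n * μ istar ≤ -((n : ℝ) ^ η * x)}
          ∪ ⋃ i ∈ Finset.univ.erase istar, C i) := measure_mono hsub
    _ ≤ P {ω | (n : ℝ) * empAvg X istar n ω - n * μ istar ≤ -((n : ℝ) ^ η * x)}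
          + P (⋃ i ∈ Finset.univ.erase istar, C i) := measure_union_le _ _
    _ ≤ ENNReal.ofReal (β / x ^ ξ) + ∑ i ∈ Finset.univ.erase istar, P (C i) :=
        add_le_add ((hconc istar n hn1 x hx).2) (measure_biUnion_finset_le _ _)
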